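/- Let p be a prime and R a commutative ring. With X(R) ⊆ R^ℕ the closed subgroup generated by {V^n⟨r⟩}, the natural map X(R) → lim_n X(R)/V^n(X(R)) is an isomorphism of abelian groups; i.e., X(R) is complete and Hausdorff with respect to the filtration by the subgroups V^n(X(R)). -/

import Mathlib

/-- The Teichmüller sequence `⟨r⟩ = (r, r^p, r^{p^2}, ...)` in `R^ℕ`. -/
def teich (p : ℕ) {R : Type*} [CommRing R] (r : R) : ℕ → R := fun k => r ^ p ^ k

/-- The Verschiebung `V(r_0, r_1, ...) = p • (0, r_0, r_1, ...)` on `R^ℕ`. -/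
def Vmap (p : ℕ) {R : Type*} [CommRing R] : (ℕ → R) → (ℕ → R) :=
  fun r k => match k with
  | 0 => 0
  | m + 1 => (p : R) * r m

/-- `X(R)`: the closed subgroup of `R^ℕ` (product topology, `R` discrete)
generated by the elements `V^n⟨r⟩`. -/
def XR (p : ℕ) (R : Type*) [CommRing R] : AddSubgroup (ℕ → R) :=
  letI : TopologicalSpace R := ⊥
  haveI : DiscreteTopology R := ⟨rfl⟩
  (AddSubgroup.closure {x : ℕ → R | ∃ n r, x = (Vmap p)^[n] (teich p r)}).topologicalClosure

section Aux
open Function Filter Topology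

variable (p : ℕ) {R : Type*} [CommRing R]

lemma Vmap_iter_eq_zero (z : ℕ → R) : ∀ n k, k < n → (Vmap p)^[n] z k = 0 := by
  intro n
  induction n with
  | zero => intro k hk; omega
  | succ n ih =>
    intro k hk
    rw [Function.iterate_succ_apply']
    match k with
    | 0 => rfl
    | m + 1 => show (p : R) * (Vmap p)^[n] z m = 0; rw [ih m (by omega), mul_zero]

lemma Vmap_add (x y : ℕ → R) : Vmap p (x + y) = Vmap p x + Vmap p y := by
  funext k; match k with
  | 0 => show (0:R) = 0 + 0; ring
  | m + 1 => show (p:R) * (x m + y m) = _ * x m + _ * y m; ring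

lemma Vmap_sum {ι : Type*} (s : Finset ι) (f : ι → ℕ → R) :
    Vmap p (∑ i ∈ s, f i) = ∑ i ∈ s, Vmap p (f i) := by
  classical
  induction s using Finset.induction with
  | empty =>
      funext k; match k with
      | 0 => rfl
      | m + 1 => show (p:R) * 0 = _; simp
  | insert _ _ h ih => rw [Finset.sum_insert h, Finset.sum_insert h, Vmap_add, ih]

lemma Vmap_iter_sum {ι : Type*} (n : ℕ) (s : Finset ι) (f : ι → ℕ → R) :
    (Vmap p)^[n] (∑ i ∈ s, f i) = ∑ i ∈ s, (Vmap p)^[n] (f i) := by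
  induction n with
  | zero => simp
  | succ n ih =>
      rw [Function.iterate_succ_apply', ih, Vmap_sum]
      exact Finset.sum_congr rfl fun i _ => by
        rw [Function.iterate_succ_apply']

section Top
variable [TopologicalSpace R] [DiscreteTopology R]

lemma Vmap_continuous : Continuous (Vmap p : (ℕ → R) → (ℕ → R)) := by
  apply continuous_pi
  intro k
  match k with
  | 0 => exact continuous_const
  | m + 1 =>
    exact (continuous_of_discreteTopology (f := fun r : R => (p : R) * r)).comp
      (continuous_apply m)

lemma tendsto_of_eventually (f : ℕ → ℕ → R) (y : ℕ → R)
    (h : ∀ k, ∀ᶠ n in atTop, f n k = y k) : Tendsto f atTop (𝓝 y) := by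
  rw [tendsto_pi_nhds]
  intro k
  exact Tendsto.congr' (Filter.EventuallyEq.symm (h k)) tendsto_const_nhds

end Top

def VHom (p : ℕ) (R : Type*) [CommRing R] : (ℕ → R) →+ (ℕ → R) where
  toFun := Vmap p
  map_zero' := by
    funext k
    match k with
    | 0 => rfl
    | m + 1 => show (p : R) * 0 = 0; rw [mul_zero]
  map_add' := Vmap_add p

lemma Vmap_mem_XR {x : ℕ → R} (hx : x ∈ XR p R) : Vmap p x ∈ XR p R := by
  letI : TopologicalSpace R := ⊥
  haveI : DiscreteTopology R := ⟨rfl⟩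
  set S : Set (ℕ → R) := {x : ℕ → R | ∃ n r, x = (Vmap p)^[n] (teich p r)} with hS
  set G := AddSubgroup.closure S with hG
  have hGG : ∀ z ∈ G, Vmap p z ∈ G := by
    intro z hz
    have hle : G ≤ AddSubgroup.comap (VHom p R) G := by
      rw [hG]
      refine (AddSubgroup.closure_le _).2 ?_
      rintro w ⟨n, r, rfl⟩
      exact AddSubgroup.subset_closure ⟨n + 1, r, (Function.iterate_succ_apply' _ _ _).symm⟩
    exact hle hz
  have hx' : x ∈ closure (G : Set (ℕ → R)) := hx
  have : Vmap p x ∈ closure (Vmap p '' (G : Set (ℕ → R))) :=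
    image_closure_subset_closure_image (Vmap_continuous p) ⟨x, hx', rfl⟩
  refine closure_mono ?_ this
  rintro _ ⟨z, hz, rfl⟩
  exact hGG z hz

end Aux

open Function Filter Topology

/-- `X(R)` is complete and Hausdorff with respect to the filtration by the
subgroups `V^n(X(R))`; equivalently, the natural map
`X(R) → lim_n X(R)/V^n(X(R))` is an isomorphism of abelian groups. -/
theorem stmt_8 (p : ℕ) (hp : p.Prime) (R : Type*) [CommRing R] :
    -- Hausdorff: injectivity of the natural map to the inverse limit
    (∀ x : ℕ → R, x ∈ XR p R →
        (∀ n : ℕ, x ∈ (Vmap p)^[n] '' (XR p R : Set (ℕ → R))) → x = 0) ∧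
    -- Completeness: surjectivity of the natural map to the inverse limit,
    -- i.e. every compatible sequence of approximations has a limit in `X(R)`.
    (∀ x : ℕ → (ℕ → R), (∀ n, x n ∈ XR p R) →
        (∀ n : ℕ, x (n + 1) - x n ∈ (Vmap p)^[n] '' (XR p R : Set (ℕ → R))) →
        ∃ y ∈ XR p R, ∀ n : ℕ, y - x n ∈ (Vmap p)^[n] '' (XR p R : Set (ℕ → R))) := by
  letI : TopologicalSpace R := ⊥
  haveI : DiscreteTopology R := ⟨rfl⟩
  have hclosed : IsClosed (XR p R : Set (ℕ → R)) :=
    AddSubgroup.isClosed_topologicalClosure _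
  have hiter_mem : ∀ (n : ℕ) {u : ℕ → R}, u ∈ XR p R → (Vmap p)^[n] u ∈ XR p R := by
    intro n
    induction n with
    | zero => intro u hu; simpa using hu
    | succ n ih =>
        intro u hu
        rw [Function.iterate_succ_apply']
        exact Vmap_mem_XR p (ih hu)
  have hiter_cont : ∀ n : ℕ, Continuous ((Vmap p)^[n] : (ℕ → R) → (ℕ → R)) := by
    intro n
    induction n with
    | zero => exact continuous_id
    | succ n ih =>
        rw [Function.iterate_succ']
        exact (Vmap_continuous p).comp ih
  constructor
  · intro x _ hV
    funext k
    obtain ⟨z, _, hz⟩ := hV (k + 1)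
    show x k = 0
    rw [← hz]
    exact Vmap_iter_eq_zero p z (k + 1) k (Nat.lt_succ_self k)
  · intro x hX hd
    choose w hwX hVw using hd
    -- stabilization of coordinates
    have stab : ∀ n m, n ≤ m → ∀ k, k < n → x m k = x n k := by
      intro n m hm
      induction m, hm using Nat.le_induction with
      | base => intro k _; rfl
      | succ m hm ih =>
          intro k hk
          have h0 := congrFun (hVw m) k
          have h1 : x (m + 1) k - x m k = 0 := by
            have h2 : (x (m + 1) - x m) k = 0 := by
              rw [← h0]; exact Vmap_iter_eq_zero p (w m) m k (lt_of_lt_of_le hk hm)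
            simpa [Pi.sub_apply] using h2
          have h2 : x (m + 1) k = x m k := sub_eq_zero.mp h1
          rw [h2, ih k hk]
    set y : ℕ → R := fun k => x (k + 1) k with hy_def
    have hy : ∀ n k, k < n → y k = x n k := by
      intro n k hk
      rcases le_total n (k + 1) with h | h
      · exact stab n (k + 1) h k hk
      · exact (stab (k + 1) n h k (Nat.lt_succ_self k)).symm
    have hyt : Tendsto x atTop (𝓝 y) := by
      refine tendsto_of_eventually x y fun k => ?_
      exact eventually_atTop.2 ⟨k + 1, fun n hn => (hy n k (by omega)).symm⟩
    have hyX : y ∈ XR p R := hclosed.mem_of_tendsto hyt (Eventually.of_forall hX)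
    refine ⟨y, hyX, fun n => ?_⟩
    -- build the element z with V^n z = y - x n
    set Sn : ℕ → (ℕ → R) := fun N => ∑ i ∈ Finset.range N, (Vmap p)^[i] (w (n + i)) with hSn_def
    have hSmem : ∀ N, Sn N ∈ XR p R := by
      intro N
      exact AddSubgroup.sum_mem _ fun i _ => hiter_mem i (hwX (n + i))
    have hSstab : ∀ k N M, k < N → N ≤ M → Sn M k = Sn N k := by
      intro k N M hk hNM
      induction M, hNM using Nat.le_induction with
      | base => rfl
      | succ M hM ih =>
          have : Sn (M + 1) = Sn M + (Vmap p)^[M] (w (n + M)) := by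
            simp [hSn_def, Finset.sum_range_succ]
          rw [this]
          have hzero : (Vmap p)^[M] (w (n + M)) k = 0 :=
            Vmap_iter_eq_zero p _ M k (lt_of_lt_of_le hk hM)
          show Sn M k + (Vmap p)^[M] (w (n + M)) k = Sn N k
          rw [hzero, add_zero, ih]
    set z : ℕ → R := fun k => Sn (k + 1) k with hz_def
    have hzt : Tendsto Sn atTop (𝓝 z) := by
      refine tendsto_of_eventually Sn z fun k => ?_
      exact eventually_atTop.2 ⟨k + 1, fun N hN => hSstab k (k + 1) N (Nat.lt_succ_self k) hN⟩
    have hzX : z ∈ XR p R := hclosed.mem_of_tendsto hzt (Eventually.of_forall hSmem)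
    have hVS : ∀ N, (Vmap p)^[n] (Sn N) = x (n + N) - x n := by
      intro N
      rw [hSn_def]
      rw [Vmap_iter_sum]
      have : ∀ i, (Vmap p)^[n] ((Vmap p)^[i] (w (n + i))) = x (n + i + 1) - x (n + i) := by
        intro i
        rw [← Function.iterate_add_apply]
        rw [← hVw (n + i)]
      calc ∑ i ∈ Finset.range N, (Vmap p)^[n] ((Vmap p)^[i] (w (n + i)))
          = ∑ i ∈ Finset.range N, (x (n + (i + 1)) - x (n + i)) := by
            refine Finset.sum_congr rfl fun i _ => ?_
            rw [this i, Nat.add_assoc]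
        _ = x (n + N) - x (n + 0) := Finset.sum_range_sub (fun i => x (n + i)) N
        _ = x (n + N) - x n := by rw [Nat.add_zero]
    have ht1 : Tendsto (fun N => (Vmap p)^[n] (Sn N)) atTop (𝓝 ((Vmap p)^[n] z)) :=
      ((hiter_cont n).tendsto z).comp hzt
    have ht2 : Tendsto (fun N => (Vmap p)^[n] (Sn N)) atTop (𝓝 (y - x n)) := by
      refine tendsto_of_eventually _ _ fun k => ?_
      refine eventually_atTop.2 ⟨k + 1, fun N hN => ?_⟩
      rw [hVS N]
      show x (n + N) k - x n k = y k - x n k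
      rw [← hy (n + N) k (by omega)]
    have := tendsto_nhds_unique ht1 ht2
    exact ⟨z, hzX, this⟩
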